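/- Let G be a group, χ : G → (ℝ, +) a nonzero homomorphism, and M = G_χ. Then the following are equivalent: (a) for all finite subgroups K and H of G, the set [M/K, M/H] is finitely generated as a W_MK-set; (b) for every finite subgroup K of G, at least one of the following holds: (i) χ(N_G(K)) = {0}; (ii) χ(N_G(K)) is an infinite cyclic subgroup of (ℝ, +); (iii) χ(N_G(K)) = χ(G). -/

import Mathlib

/-- `[M/K, M/H]` for `M = G_χ`: the set of cosets `mH` with `m ∈ G_χ` and `Km ⊆ mH`. -/
def morSetChi {G : Type*} [Group G] (χ : G → ℝ) (K H : Set G) : Set (Set G) :=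
  {X | ∃ m : G, 0 ≤ χ m ∧ X = (m * ·) '' H ∧ (· * m) '' K ⊆ (m * ·) '' H}

/-- Representatives of elements of `W_MK = {xK | x ∈ G_χ, Kx = xK}` for `M = G_χ`. -/
def weylChi {G : Type*} [Group G] (χ : G → ℝ) (K : Set G) : Set G :=
  {x | 0 ≤ χ x ∧ (· * x) '' K = (x * ·) '' K}

/-- `Ω` is finitely generated as a `W_MK`-set: `Ω = W_MK · F` for a finite `F ⊆ Ω`. -/
def IsFGWChi {G : Type*} [Group G] (χ : G → ℝ) (K : Set G) (Ω : Set (Set G)) : Prop :=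
  ∃ F : Set (Set G), F.Finite ∧ F ⊆ Ω ∧
    Ω = {X | ∃ x ∈ weylChi χ K, ∃ Y ∈ F, X = (x * ·) '' Y}

section helpers
variable {G : Type*} [Group G] {χ : G → ℝ} (hhom : ∀ a b : G, χ (a * b) = χ a + χ b)

section withhom
include hhom

lemma chiOne : χ 1 = 0 := by have := hhom 1 1; simp at this; linarith

lemma chiInv (g : G) : χ g⁻¹ = -χ g := by
  have := hhom g⁻¹ g; rw [inv_mul_cancel, chiOne hhom] at this; linarith

lemma chiPow (g : G) (n : ℕ) : χ (g ^ n) = n * χ g := by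
  induction n with
  | zero => simpa using chiOne hhom
  | succ n ih => rw [pow_succ, hhom, ih]; push_cast; ring

lemma chiFinZero {H : Subgroup G} (hH : (H : Set G).Finite) {h : G} (hh : h ∈ H) : χ h = 0 := by
  haveI : Finite H := hH.to_subtype
  have hord : 0 < orderOf (⟨h, hh⟩ : H) := orderOf_pos _
  have hpow : (⟨h, hh⟩ : H) ^ orderOf (⟨h, hh⟩ : H) = 1 := pow_orderOf_eq_one _
  have h1 : h ^ orderOf (⟨h, hh⟩ : H) = 1 := by
    have := congrArg (Subtype.val) hpow
    simpa using this
  have h2 := chiPow hhom h (orderOf (⟨h, hh⟩ : H))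
  rw [h1, chiOne hhom] at h2
  have : (0:ℝ) < (orderOf (⟨h, hh⟩ : H) : ℝ) := by exact_mod_cast hord
  have := h2.symm
  rcases mul_eq_zero.mp this with h | h
  · linarith
  · exact h

end withhom

lemma memCoset {H : Subgroup G} {m y : G} : y ∈ (m * ·) '' (H : Set G) ↔ m⁻¹ * y ∈ H := by
  constructor
  · rintro ⟨h, hh, rfl⟩; simpa using hh
  · intro hy; exact ⟨m⁻¹ * y, hy, by group⟩

lemma cosetEq {H : Subgroup G} {m m' : G} :
    (m * ·) '' (H : Set G) = (m' * ·) '' (H : Set G) ↔ m⁻¹ * m' ∈ H := by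
  constructor
  · intro h
    have : m' ∈ (m * ·) '' (H : Set G) := by
      rw [h]; exact ⟨1, H.one_mem, by simp⟩
    exact memCoset.mp this
  · intro hmem
    ext y
    rw [memCoset, memCoset]
    constructor
    · intro hy
      have := H.mul_mem (H.inv_mem hmem) hy
      simpa [mul_assoc] using this
    · intro hy
      have := H.mul_mem hmem hy
      simpa [mul_assoc] using this

lemma cosetComp (x m : G) (s : Set G) :
    (x * ·) '' ((m * ·) '' s) = ((x * m) * ·) '' s := by
  rw [← Set.image_comp]; apply Set.image_congr; intro a _; simp [mul_assoc]

lemma subsetIffConj {K H : Subgroup G} {m : G} :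
    (· * m) '' (K : Set G) ⊆ (m * ·) '' (H : Set G) ↔ ∀ k ∈ K, m⁻¹ * k * m ∈ H := by
  constructor
  · intro hs k hk
    have : k * m ∈ (m * ·) '' (H : Set G) := hs ⟨k, hk, rfl⟩
    rw [memCoset] at this
    simpa [mul_assoc] using this
  · rintro hc y ⟨k, hk, rfl⟩
    rw [memCoset]
    simpa [mul_assoc] using hc k hk

lemma weylIff {K : Subgroup G} {x : G} :
    x ∈ weylChi χ (K : Set G) ↔ 0 ≤ χ x ∧ x ∈ (Subgroup.normalizer (K : Set G)) := by
  unfold weylChi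
  simp only [Set.mem_setOf_eq, Subgroup.mem_normalizer_iff]
  refine and_congr_right fun _ => ?_
  constructor
  · intro hset k
    constructor
    · intro hk
      have h1 : x * k ∈ (fun y => y * x) '' (K : Set G) := by
        rw [hset]; exact ⟨k, hk, rfl⟩
      rcases h1 with ⟨k', hk', he⟩
      have he' : k' * x = x * k := he
      have : x * k * x⁻¹ = k' := by
        calc x * k * x⁻¹ = (x * k) * x⁻¹ := by group
          _ = (k' * x) * x⁻¹ := by rw [he']
          _ = k' := by group
      rw [this]; exact hk'
    · intro hk
      have h1 : (x * k * x⁻¹) * x ∈ (fun y => x * y) '' (K : Set G) := by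
        rw [← hset]; exact ⟨x * k * x⁻¹, hk, rfl⟩
      rcases h1 with ⟨k', hk', he⟩
      have he' : x * k' = x * k * x⁻¹ * x := he
      have : k = k' := by
        apply mul_left_cancel (a := x)
        rw [he']; group
      rw [this]; exact hk'
  · intro hnorm
    ext y
    simp only [Set.mem_image]
    constructor
    · rintro ⟨k, hk, rfl⟩
      have hmem : x⁻¹ * k * x ∈ K := by
        apply (hnorm (x⁻¹ * k * x)).mpr
        have : x * (x⁻¹ * k * x) * x⁻¹ = k := by group
        rw [this]; exact hk
      exact ⟨x⁻¹ * k * x, hmem, by group⟩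
    · rintro ⟨k, hk, rfl⟩
      exact ⟨x * k * x⁻¹, (hnorm k).mp hk, by group⟩

lemma conjEqIff {K : Subgroup G} {m m₀ : G} :
    ((fun k => m⁻¹ * k * m) '' (K : Set G) = (fun k => m₀⁻¹ * k * m₀) '' (K : Set G)) ↔
      m * m₀⁻¹ ∈ (Subgroup.normalizer (K : Set G)) := by
  rw [Subgroup.mem_normalizer_iff]
  constructor
  · intro heq h
    constructor
    · intro hh
      have h1 : m₀⁻¹ * h * m₀ ∈ (fun k => m⁻¹ * k * m) '' (K : Set G) := by
        rw [heq]; exact ⟨h, hh, rfl⟩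
      rcases h1 with ⟨k, hk, he⟩
      have he' : m⁻¹ * k * m = m₀⁻¹ * h * m₀ := he
      have : m * m₀⁻¹ * h * (m * m₀⁻¹)⁻¹ = k := by
        calc m * m₀⁻¹ * h * (m * m₀⁻¹)⁻¹ = m * (m₀⁻¹ * h * m₀) * m⁻¹ := by group
          _ = m * (m⁻¹ * k * m) * m⁻¹ := by rw [he']
          _ = k := by group
      rw [this]; exact hk
    · intro hh
      have h1 : m⁻¹ * (m * m₀⁻¹ * h * (m * m₀⁻¹)⁻¹) * m ∈
          (fun k => m₀⁻¹ * k * m₀) '' (K : Set G) := by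
        rw [← heq]; exact ⟨_, hh, rfl⟩
      rcases h1 with ⟨k, hk, he⟩
      have he' : m₀⁻¹ * k * m₀ = m⁻¹ * (m * m₀⁻¹ * h * (m * m₀⁻¹)⁻¹) * m := he
      have : h = k := by
        calc h = m₀ * (m⁻¹ * (m * m₀⁻¹ * h * (m * m₀⁻¹)⁻¹) * m) * m₀⁻¹ := by group
          _ = m₀ * (m₀⁻¹ * k * m₀) * m₀⁻¹ := by rw [he']
          _ = k := by group
      rw [this]; exact hk
  · intro hnorm
    ext z
    simp only [Set.mem_image]
    constructor
    · rintro ⟨k, hk, rfl⟩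
      have hmem : (m * m₀⁻¹)⁻¹ * k * (m * m₀⁻¹) ∈ K := by
        apply (hnorm _).mpr
        have : m * m₀⁻¹ * ((m * m₀⁻¹)⁻¹ * k * (m * m₀⁻¹)) * (m * m₀⁻¹)⁻¹ = k := by group
        rw [this]; exact hk
      refine ⟨(m * m₀⁻¹)⁻¹ * k * (m * m₀⁻¹), hmem, by group⟩
    · rintro ⟨k, hk, rfl⟩
      refine ⟨(m * m₀⁻¹) * k * (m * m₀⁻¹)⁻¹, (hnorm k).mp hk, by group⟩

end helpers

section minpart
variable {G : Type*} [Group G] {χ : G → ℝ} (hhom : ∀ a b : G, χ (a * b) = χ a + χ b)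
include hhom

lemma minExists {K : Subgroup G}
    (hcond : (χ '' ((Subgroup.normalizer (K : Set G)) : Set G) = {0}) ∨
      (∃ r : ℝ, r ≠ 0 ∧ χ '' ((Subgroup.normalizer (K : Set G)) : Set G) = {y : ℝ | ∃ n : ℤ, y = n * r}) ∨
      (χ '' ((Subgroup.normalizer (K : Set G)) : Set G) = Set.range χ))
    (m₀ : G) (h₀ : 0 ≤ χ m₀) :
    ∃ m₁, 0 ≤ χ m₁ ∧ m₁ * m₀⁻¹ ∈ (Subgroup.normalizer (K : Set G)) ∧
      ∀ m, 0 ≤ χ m → m * m₀⁻¹ ∈ (Subgroup.normalizer (K : Set G)) → χ m₁ ≤ χ m := by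
  have hval : ∀ m : G, χ m = χ (m * m₀⁻¹) + χ m₀ := by
    intro m
    have : m * m₀⁻¹ * m₀ = m := by group
    rw [← hhom, this]
  rcases hcond with h0 | ⟨r, hr, hA⟩ | hA
  · refine ⟨m₀, h₀, by simpa using (Subgroup.normalizer (K : Set G)).one_mem, ?_⟩
    intro m hm hmem
    have : χ (m * m₀⁻¹) ∈ χ '' ((Subgroup.normalizer (K : Set G)) : Set G) := ⟨_, hmem, rfl⟩
    rw [h0] at this
    have := Set.mem_singleton_iff.mp this
    rw [hval m, this]
    linarith
  · -- cyclic case; wlog r > 0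
    have key : ∀ r' : ℝ, 0 < r' →
        (χ '' ((Subgroup.normalizer (K : Set G)) : Set G) = {y : ℝ | ∃ n : ℤ, y = n * r'}) →
        ∃ m₁, 0 ≤ χ m₁ ∧ m₁ * m₀⁻¹ ∈ (Subgroup.normalizer (K : Set G)) ∧
          ∀ m, 0 ≤ χ m → m * m₀⁻¹ ∈ (Subgroup.normalizer (K : Set G)) → χ m₁ ≤ χ m := by
      intro r' hr' hA'
      obtain ⟨k₀, hk₀, hleast⟩ := Int.exists_least_of_bdd
        (P := fun k : ℤ => 0 ≤ χ m₀ + k * r')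
        ⟨⌈-χ m₀ / r'⌉, by
          intro z hz
          rw [Int.ceil_le]
          rw [div_le_iff₀ hr']
          push_cast
          linarith⟩
        ⟨0, by simpa using h₀⟩
      have : (k₀ : ℝ) * r' ∈ χ '' ((Subgroup.normalizer (K : Set G)) : Set G) := by
        rw [hA']; exact ⟨k₀, rfl⟩
      obtain ⟨n, hnN, hn⟩ := this
      refine ⟨n * m₀, ?_, by simpa using hnN, ?_⟩
      · rw [hhom, hn]; linarith
      · intro m hm hmem
        have hmval : χ (m * m₀⁻¹) ∈ χ '' ((Subgroup.normalizer (K : Set G)) : Set G) := ⟨_, hmem, rfl⟩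
        rw [hA'] at hmval
        obtain ⟨k, hk⟩ := hmval
        have h1 : χ m = χ m₀ + k * r' := by rw [hval m, hk]; ring
        have h2 : k₀ ≤ k := hleast k (by rw [← h1]; exact hm)
        have h3 : (k₀ : ℝ) ≤ (k : ℝ) := by exact_mod_cast h2
        rw [hhom, hn, h1]
        have : (k₀ : ℝ) * r' ≤ k * r' := by
          apply mul_le_mul_of_nonneg_right h3 (le_of_lt hr')
        linarith
    rcases lt_trichotomy r 0 with hneg | hzero | hpos
    · apply key (-r) (by linarith)
      rw [hA]
      ext y
      simp only [Set.mem_setOf_eq]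
      constructor
      · rintro ⟨n, rfl⟩; exact ⟨-n, by push_cast; ring⟩
      · rintro ⟨n, rfl⟩; exact ⟨-n, by push_cast; ring⟩
    · exact absurd hzero hr
    · exact key r hpos hA
  · -- χ '' N = range χ
    have : -χ m₀ ∈ χ '' ((Subgroup.normalizer (K : Set G)) : Set G) := by
      rw [hA]; exact ⟨m₀⁻¹, chiInv hhom m₀⟩
    obtain ⟨n, hnN, hn⟩ := this
    refine ⟨n * m₀, ?_, by simpa using hnN, ?_⟩
    · rw [hhom, hn]; linarith
    · intro m hm _
      rw [hhom, hn]
      linarith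


lemma fgOfCond {K H : Subgroup G} (hH : (H : Set G).Finite)
    (hcond : (χ '' ((Subgroup.normalizer (K : Set G)) : Set G) = {0}) ∨
      (∃ r : ℝ, r ≠ 0 ∧ χ '' ((Subgroup.normalizer (K : Set G)) : Set G) = {y : ℝ | ∃ n : ℤ, y = n * r}) ∨
      (χ '' ((Subgroup.normalizer (K : Set G)) : Set G) = Set.range χ)) :
    IsFGWChi χ (K : Set G) (morSetChi χ (K : Set G) (H : Set G)) := by
  classical
  set T : Set G := {m | 0 ≤ χ m ∧ (· * m) '' (K : Set G) ⊆ (m * ·) '' (H : Set G)} with hT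
  set cs : G → Set G := fun m => (fun k => m⁻¹ * k * m) '' (K : Set G) with hcs
  -- minimizers for each conjugation class
  have hS : ∀ L ∈ cs '' T, ∃ m₁, m₁ ∈ T ∧ cs m₁ = L ∧ ∀ m ∈ T, cs m = L → χ m₁ ≤ χ m := by
    rintro L ⟨m₀, hm₀T, rfl⟩
    obtain ⟨m₁, h1, h2, h3⟩ := minExists hhom hcond m₀ hm₀T.1
    have heqcs : cs m₁ = cs m₀ := conjEqIff.mpr h2
    refine ⟨m₁, ⟨h1, ?_⟩, heqcs, ?_⟩
    · rw [subsetIffConj]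
      intro k hk
      have : m₁⁻¹ * k * m₁ ∈ cs m₀ := by
        rw [← heqcs]; exact ⟨k, hk, rfl⟩
      obtain ⟨k', hk', he⟩ := this
      have he' : m₀⁻¹ * k' * m₀ = m₁⁻¹ * k * m₁ := he
      rw [← he']
      exact (subsetIffConj.mp hm₀T.2) k' hk'
    · intro m hmT hmcs
      exact h3 m hmT.1 (conjEqIff.mp hmcs)
  choose f hf1 hf2 hf3 using hS
  -- the finite generating set
  have hSfin : (cs '' T).Finite := by
    apply Set.Finite.subset hH.finite_subsets
    rintro L ⟨m, hmT, rfl⟩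
    intro z hz
    obtain ⟨k, hk, he⟩ := hz
    have hmem : m⁻¹ * k * m ∈ H := (subsetIffConj.mp hmT.2) k hk
    have he' : m⁻¹ * k * m = z := he
    rw [← he']
    exact hmem
  haveI : Finite ↥(cs '' T) := hSfin.to_subtype
  set F : Set (Set G) :=
    Set.range (fun L : ↥(cs '' T) => ((f L.1 L.2) * ·) '' (H : Set G)) with hF
  have hFsub : F ⊆ morSetChi χ (K : Set G) (H : Set G) := by
    rintro X ⟨L, rfl⟩
    exact ⟨f L.1 L.2, (hf1 L.1 L.2).1, rfl, (hf1 L.1 L.2).2⟩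
  refine ⟨F, Set.finite_range _, hFsub, ?_⟩
  ext X
  constructor
  · rintro ⟨m, hm0, rfl, hmsub⟩
    have hmT : m ∈ T := ⟨hm0, hmsub⟩
    have hL : cs m ∈ cs '' T := ⟨m, hmT, rfl⟩
    set m₁ := f (cs m) hL with hm₁
    have hm₁T : m₁ ∈ T := hf1 _ _
    have hcseq : cs m = cs m₁ := (hf2 (cs m) hL).symm
    have hxnorm : m * m₁⁻¹ ∈ (Subgroup.normalizer (K : Set G)) := conjEqIff.mp hcseq
    have hchi : χ m₁ ≤ χ m := hf3 (cs m) hL m hmT rfl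
    have hxval : χ (m * m₁⁻¹) = χ m - χ m₁ := by
      have h : m * m₁⁻¹ * m₁ = m := by group
      have := hhom (m * m₁⁻¹) m₁
      rw [h] at this
      linarith
    refine ⟨m * m₁⁻¹, weylIff.mpr ⟨by rw [hxval]; linarith, hxnorm⟩,
      (m₁ * ·) '' (H : Set G), ⟨⟨cs m, hL⟩, rfl⟩, ?_⟩
    rw [cosetComp]
    have : m * m₁⁻¹ * m₁ = m := by group
    rw [this]
  · rintro ⟨x, hx, Y, ⟨L, rfl⟩, rfl⟩
    obtain ⟨hx0, hxnorm⟩ := weylIff.mp hx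
    set m₁ := f L.1 L.2 with hm₁
    have hm₁T : m₁ ∈ T := hf1 _ _
    rw [cosetComp]
    refine ⟨x * m₁, ?_, rfl, ?_⟩
    · rw [hhom]; exact add_nonneg hx0 hm₁T.1
    · rw [subsetIffConj]
      intro k hk
      have hkx : x⁻¹ * k * x ∈ K := by
        apply (Subgroup.mem_normalizer_iff.mp hxnorm (x⁻¹ * k * x)).mpr
        have : x * (x⁻¹ * k * x) * x⁻¹ = k := by group
        rw [this]; exact hk
      have h2 : m₁⁻¹ * (x⁻¹ * k * x) * m₁ ∈ H := (subsetIffConj.mp hm₁T.2) _ hkx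
      have heq : (x * m₁)⁻¹ * k * (x * m₁) = m₁⁻¹ * (x⁻¹ * k * x) * m₁ := by group
      rw [heq]
      exact h2


lemma notFG {K : Subgroup G} (hK : (K : Set G).Finite)
    (hnc : ¬ ((χ '' ((Subgroup.normalizer (K : Set G)) : Set G) = {0}) ∨
      (∃ r : ℝ, r ≠ 0 ∧ χ '' ((Subgroup.normalizer (K : Set G)) : Set G) = {y : ℝ | ∃ n : ℤ, y = n * r}) ∨
      (χ '' ((Subgroup.normalizer (K : Set G)) : Set G) = Set.range χ))) :
    ∃ H : Subgroup G, (H : Set G).Finite ∧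
      ¬ IsFGWChi χ (K : Set G) (morSetChi χ (K : Set G) (H : Set G)) := by
  classical
  push_neg at hnc
  obtain ⟨h1, h2, h3⟩ := hnc
  -- the image of the normalizer as an additive subgroup of ℝ
  set A : AddSubgroup ℝ :=
    { carrier := χ '' ((Subgroup.normalizer (K : Set G)) : Set G)
      add_mem' := by
        rintro a b ⟨n₁, hn₁, rfl⟩ ⟨n₂, hn₂, rfl⟩
        exact ⟨n₁ * n₂, (Subgroup.normalizer (K : Set G)).mul_mem hn₁ hn₂, (hhom n₁ n₂).symm ▸ rfl⟩
      zero_mem' := ⟨1, (Subgroup.normalizer (K : Set G)).one_mem, chiOne hhom⟩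
      neg_mem' := by
        rintro a ⟨n, hn, rfl⟩
        exact ⟨n⁻¹, (Subgroup.normalizer (K : Set G)).inv_mem hn, chiInv hhom n⟩ } with hAdef
  have hAcar : (A : Set ℝ) = χ '' ((Subgroup.normalizer (K : Set G)) : Set G) := rfl
  have hdense : Dense (A : Set ℝ) := by
    rcases AddSubgroup.dense_or_cyclic A with hd | ⟨a, ha⟩
    · exact hd
    · exfalso
      by_cases ha0 : a = 0
      · subst ha0
        apply h1
        rw [← hAcar, ha]
        simp [AddSubgroup.closure_singleton_zero]
      · apply h2 a ha0
        rw [← hAcar, ha]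
        ext y
        simp only [SetLike.mem_coe, AddSubgroup.mem_closure_singleton, Set.mem_setOf_eq]
        constructor
        · rintro ⟨n, rfl⟩; exact ⟨n, (zsmul_eq_mul a n).symm ▸ rfl⟩
        · rintro ⟨n, rfl⟩; exact ⟨n, (zsmul_eq_mul a n)⟩
  -- choose g with χ g ∉ A and 0 < χ g
  have hgex : ∃ g : G, χ g ∉ (A : Set ℝ) := by
    by_contra hc
    push_neg at hc
    apply h3
    apply Set.Subset.antisymm
    · rintro y ⟨n, _, rfl⟩; exact ⟨n, rfl⟩
    · rintro y ⟨g, rfl⟩; exact hc g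
  obtain ⟨g, hg⟩ := hgex
  have hg0 : χ g ≠ 0 := fun h => hg (h ▸ A.zero_mem)
  obtain ⟨g1, hg1, hg1pos⟩ : ∃ g1 : G, χ g1 ∉ (A : Set ℝ) ∧ 0 < χ g1 := by
    rcases lt_or_gt_of_ne hg0 with hlt | hgt
    · refine ⟨g⁻¹, ?_, by rw [chiInv hhom]; linarith⟩
      intro hmem
      apply hg
      have := A.neg_mem hmem
      rwa [chiInv hhom, neg_neg] at this
    · exact ⟨g, hg, hgt⟩
  -- the finite subgroup H = g1⁻¹ K g1
  set H : Subgroup G := K.map (MulAut.conj g1⁻¹).toMonoidHom with hHdef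
  have hHcar : (H : Set G) = (fun k => g1⁻¹ * k * g1) '' (K : Set G) := by
    ext z
    simp only [hHdef, Subgroup.coe_map, Set.mem_image, MulEquiv.coe_toMonoidHom,
      MulAut.conj_apply, inv_inv]
  have hHfin : (H : Set G).Finite := by
    rw [hHcar]; exact hK.image _
  refine ⟨H, hHfin, ?_⟩
  rintro ⟨F, hFfin, hFsub, hEq⟩
  -- conjugation is injective, so inclusion of conjugates forces equality
  have hconjinj : ∀ m : G, Function.Injective (fun k => m⁻¹ * k * m) := by
    intro m a b hab
    simp only at hab
    have := mul_right_cancel hab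
    exact mul_left_cancel this
  have hfact1 : ∀ m : G, (· * m) '' (K : Set G) ⊆ (m * ·) '' (H : Set G) →
      m * g1⁻¹ ∈ (Subgroup.normalizer (K : Set G)) := by
    intro m hsub
    have hsub' : (fun k => m⁻¹ * k * m) '' (K : Set G) ⊆
        (fun k => g1⁻¹ * k * g1) '' (K : Set G) := by
      rintro z ⟨k, hk, rfl⟩
      rw [← hHcar]
      exact (subsetIffConj.mp hsub) k hk
    have hcs : (fun k => m⁻¹ * k * m) '' (K : Set G) =
        (fun k => g1⁻¹ * k * g1) '' (K : Set G) := by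
      apply Set.eq_of_subset_of_ncard_le hsub' _ (hK.image _)
      rw [Set.ncard_image_of_injective _ (hconjinj m),
        Set.ncard_image_of_injective _ (hconjinj g1)]
    exact conjEqIff.mp hcs
  -- every element of the mor-set has strictly positive value
  have hfact2 : ∀ m : G, 0 ≤ χ m → (· * m) '' (K : Set G) ⊆ (m * ·) '' (H : Set G) →
      0 < χ m := by
    intro m hm0 hsub
    rcases eq_or_lt_of_le hm0 with heq | hlt
    · exfalso
      have hnorm := hfact1 m hsub
      have hval : χ (m * g1⁻¹) = χ m + χ g1⁻¹ := hhom m g1⁻¹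
      rw [← heq, chiInv hhom] at hval
      have : χ (m * g1⁻¹) ∈ (A : Set ℝ) := ⟨m * g1⁻¹, hnorm, rfl⟩
      rw [hval] at this
      apply hg1
      have := A.neg_mem this
      simpa using this
    · exact hlt
  -- g1 itself gives an element of the mor-set
  have hg1sub : (· * g1) '' (K : Set G) ⊆ (g1 * ·) '' (H : Set G) := by
    rw [subsetIffConj]
    intro k hk
    have : g1⁻¹ * k * g1 ∈ (H : Set G) := by rw [hHcar]; exact ⟨k, hk, rfl⟩
    exact this
  have hX0 : (g1 * ·) '' (H : Set G) ∈ morSetChi χ (K : Set G) (H : Set G) :=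
    ⟨g1, le_of_lt hg1pos, rfl, hg1sub⟩
  -- F is nonempty
  have hFne : F.Nonempty := by
    rw [hEq] at hX0
    obtain ⟨x, _, Y, hY, _⟩ := hX0
    exact ⟨Y, hY⟩
  -- representatives of elements of F
  have hrepex : ∀ Y ∈ F, ∃ m : G, 0 ≤ χ m ∧ Y = (m * ·) '' (H : Set G) ∧
      (· * m) '' (K : Set G) ⊆ (m * ·) '' (H : Set G) := fun Y hY => hFsub hY
  choose rep hrep1 hrep2 hrep3 using hrepex
  haveI : Finite ↥F := hFfin.to_subtype
  set vF : Set ℝ := Set.range (fun p : ↥F => χ (rep p.1 p.2)) with hvF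
  obtain ⟨Y₀, hY₀⟩ := hFne
  obtain ⟨v, hv, hvmin⟩ := Set.exists_min_image vF id (Set.finite_range _)
    ⟨_, ⟨⟨Y₀, hY₀⟩, rfl⟩⟩
  have hvpos : 0 < v := by
    obtain ⟨⟨Y, hY⟩, rfl⟩ := hv
    exact hfact2 _ (hrep1 Y hY) (hrep3 Y hY)
  -- use density to find a small positive element
  obtain ⟨a, haA, haIoo⟩ := hdense.exists_mem_open isOpen_Ioo
    (Set.nonempty_Ioo.mpr (show -χ g1 < v - χ g1 by linarith))
  obtain ⟨ha1, ha2⟩ := haIoo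
  obtain ⟨n, hnN, hna⟩ := haA
  set m : G := n * g1 with hm
  have hmval : χ m = a + χ g1 := by rw [hm, hhom, hna]
  have hmpos : 0 < χ m := by rw [hmval]; linarith
  have hmlt : χ m < v := by rw [hmval]; linarith
  have hmsub : (· * m) '' (K : Set G) ⊆ (m * ·) '' (H : Set G) := by
    rw [subsetIffConj]
    intro k hk
    have hkn : n⁻¹ * k * n ∈ K := by
      apply (Subgroup.mem_normalizer_iff.mp hnN (n⁻¹ * k * n)).mpr
      have : n * (n⁻¹ * k * n) * n⁻¹ = k := by group
      rw [this]; exact hk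
    have : g1⁻¹ * (n⁻¹ * k * n) * g1 ∈ (H : Set G) := by
      rw [hHcar]; exact ⟨n⁻¹ * k * n, hkn, rfl⟩
    have heq : m⁻¹ * k * m = g1⁻¹ * (n⁻¹ * k * n) * g1 := by rw [hm]; group
    rw [heq]
    exact this
  have hXmem : (m * ·) '' (H : Set G) ∈ morSetChi χ (K : Set G) (H : Set G) :=
    ⟨m, le_of_lt hmpos, rfl, hmsub⟩
  rw [hEq] at hXmem
  obtain ⟨x, hx, Y, hY, hXeq⟩ := hXmem
  have hYrep : Y = (rep Y hY * ·) '' (H : Set G) := hrep2 Y hY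
  rw [hYrep, cosetComp] at hXeq
  -- compare values
  have hcoset : (x * rep Y hY)⁻¹ * m ∈ H := cosetEq.mp hXeq.symm
  have hhzero : χ ((x * rep Y hY)⁻¹ * m) = 0 := chiFinZero hhom hHfin hcoset
  have hmdecomp : (x * rep Y hY) * ((x * rep Y hY)⁻¹ * m) = m := by group
  have hval2 : χ m = χ (x * rep Y hY) + χ ((x * rep Y hY)⁻¹ * m) := by
    rw [← hhom, hmdecomp]
  have hx0 : 0 ≤ χ x := hx.1
  have hrepv : v ≤ χ (rep Y hY) := hvmin _ ⟨⟨Y, hY⟩, rfl⟩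
  rw [hhzero, hhom x (rep Y hY)] at hval2
  linarith

end minpart

/-- for `M = G_χ`, all the `W_MK`-sets `[M/K, M/H]` (for `K, H` finite
subgroups of `G`) are finitely generated iff for every finite subgroup `K` of `G` one of
the following holds: `χ(N_G(K)) = 0`, `χ(N_G(K))` is infinite cyclic, or
`χ(N_G(K)) = χ(G)`. -/
theorem stmt8 {G : Type*} [Group G] (χ : G → ℝ)
    (hhom : ∀ a b : G, χ (a * b) = χ a + χ b) (hne : ∃ g : G, χ g ≠ 0) :
    (∀ K H : Subgroup G, (K : Set G).Finite → (H : Set G).Finite →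
        IsFGWChi χ (K : Set G) (morSetChi χ (K : Set G) (H : Set G))) ↔
    (∀ K : Subgroup G, (K : Set G).Finite →
        (χ '' (Subgroup.normalizer (K : Set G) : Set G) = {0}) ∨
        (∃ r : ℝ, r ≠ 0 ∧ χ '' (Subgroup.normalizer (K : Set G) : Set G) = {y : ℝ | ∃ n : ℤ, y = n * r}) ∨
        (χ '' (Subgroup.normalizer (K : Set G) : Set G) = Set.range χ)) := by
  constructor
  · intro hfg K hK
    by_contra hnc
    obtain ⟨H, hHfin, hnfg⟩ := notFG hhom hK hnc
    exact hnfg (hfg K H hK hHfin)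
  · intro hcond K H hK hH
    exact fgOfCond hhom hH (hcond K hK)
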